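/- For every valid SPGM S and every partial assignment y of a subset of its variables X ∪ Z, the evaluation of S equals the sum of the evaluations of all of its subtrees: S(y) = ∑_{τ ∈ T(S)} τ(y), where each τ(y) is computed by message passing within the subtree τ. -/

import Mathlib

attribute [local instance] Classical.propDecidable

noncomputable section

/-- Indicator variable `[v]_k` relative to a partial assignment `y`
(`y v = none` means `v` is unobserved). -/
def Indicator {Var : Type} (y : Var → Option ℕ) (v : Var) (k : ℕ) : ℝ :=
  match y v with
  | none => 1
  | some i => if i = k then 1 else 0

/-- Kinds of nodes of a sum-product graphical model: variable nodes (Vnodes),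
product nodes, observed sum nodes and unobserved sum nodes. -/
inductive SPGMKind (Xvar Zvar : Type) : Type where
  | vnode (x : Xvar)
  | prod
  | sumObs (z : Zvar)
  | sumUnobs

/-- A sum-product graphical model (SPGM) over variables `Xvar` (with domain sizes `Xdom`)
and context variables `Zvar` (with domain sizes `Zdom`).  The underlying directed graph
is given by `children`; acyclicity is encoded by the strictly decreasing `rank`.
`Q`/`W` are the edge weights of observed/unobserved sum nodes (`Q t k` is the weight of the
`k`-th child edge of `t`), `Pcond t s k j` is the conditional table `P_{s,t}(k | j)` used when
`s` is a Vparent of the Vnode `t`, and `Punary t k` is the unary table `P_t(k)` used when the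
Vnode `t` has no Vparent. -/
structure SPGM (Xvar Zvar : Type) (Xdom : Xvar → ℕ) (Zdom : Zvar → ℕ) where
  V : Type
  fintypeV : Fintype V
  decEqV : DecidableEq V
  root : V
  kind : V → SPGMKind Xvar Zvar
  children : V → List V
  rank : V → ℕ
  rank_lt : ∀ t c, c ∈ children t → rank c < rank t
  Q : V → ℕ → ℝ
  W : V → ℕ → ℝ
  Pcond : V → V → ℕ → ℕ → ℝ
  Punary : V → ℕ → ℝ

attribute [instance] SPGM.fintypeV SPGM.decEqV

namespace SPGM

variable {Xvar Zvar : Type} {Xdom : Xvar → ℕ} {Zdom : Zvar → ℕ}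

def isVnode (S : SPGM Xvar Zvar Xdom Zdom) (t : S.V) : Prop :=
  ∃ x, S.kind t = SPGMKind.vnode x

def isProd (S : SPGM Xvar Zvar Xdom Zdom) (t : S.V) : Prop :=
  S.kind t = SPGMKind.prod

def isSumObs (S : SPGM Xvar Zvar Xdom Zdom) (t : S.V) : Prop :=
  ∃ z, S.kind t = SPGMKind.sumObs z

def isSumUnobs (S : SPGM Xvar Zvar Xdom Zdom) (t : S.V) : Prop :=
  S.kind t = SPGMKind.sumUnobs

def isSum (S : SPGM Xvar Zvar Xdom Zdom) (t : S.V) : Prop :=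
  S.isSumObs t ∨ S.isSumUnobs t

/-- The variable labeling a node, if any. -/
def label (S : SPGM Xvar Zvar Xdom Zdom) (t : S.V) : Option (Xvar ⊕ Zvar) :=
  match S.kind t with
  | SPGMKind.vnode x => some (Sum.inl x)
  | SPGMKind.sumObs z => some (Sum.inr z)
  | _ => none

/-- Domain size of the variable of a Vnode (`0` for non-Vnodes). -/
def domOf (S : SPGM Xvar Zvar Xdom Zdom) (t : S.V) : ℕ :=
  match S.kind t with
  | SPGMKind.vnode x => Xdom x
  | _ => 0

/-- Reachability along directed edges. -/
def Reach (S : SPGM Xvar Zvar Xdom Zdom) : S.V → S.V → Prop :=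
  Relation.ReflTransGen fun a b => b ∈ S.children a

/-- The scope of a node: all variables labeling nodes of the sub-DAG rooted at it. -/
def scope (S : SPGM Xvar Zvar Xdom Zdom) (t : S.V) : Set (Xvar ⊕ Zvar) :=
  {v | ∃ u, S.Reach t u ∧ S.label u = some v}

/-- There is a (nonempty) directed path from `s` to `t` containing no intermediate Vnode. -/
inductive ReachNoV (S : SPGM Xvar Zvar Xdom Zdom) : S.V → S.V → Prop where
  | base {s c : S.V} : c ∈ S.children s → ReachNoV S s c
  | step {s t c : S.V} : ReachNoV S s t → ¬ S.isVnode t → c ∈ S.children t → ReachNoV S s c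

/-- `s` is a Vparent of `t`. -/
def vparent (S : SPGM Xvar Zvar Xdom Zdom) (s t : S.V) : Prop :=
  S.isVnode s ∧ S.ReachNoV s t

/-- Validity of an SPGM: structural conditions and nonnegativity of all parameters. -/
structure Valid (S : SPGM Xvar Zvar Xdom Zdom) : Prop where
  xdom_pos : ∀ x : Xvar, 0 < Xdom x
  zdom_pos : ∀ z : Zvar, 0 < Zdom z
  reach_root : ∀ v : S.V, S.Reach S.root v
  vnode_child : ∀ t : S.V, S.isVnode t → (S.children t).length ≤ 1
  vnode_scope : ∀ (t : S.V) (x : Xvar) (c : S.V), S.kind t = SPGMKind.vnode x →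
    c ∈ S.children t → Sum.inl x ∉ S.scope c
  sum_child : ∀ t : S.V, S.isSum t → S.children t ≠ []
  sumObs_card : ∀ (t : S.V) (z : Zvar), S.kind t = SPGMKind.sumObs z →
    (S.children t).length = Zdom z
  sum_scope : ∀ t : S.V, S.isSum t →
    ∀ c ∈ S.children t, ∀ c' ∈ S.children t, S.scope c = S.scope c'
  sumObs_scope : ∀ (t : S.V) (z : Zvar) (c : S.V), S.kind t = SPGMKind.sumObs z →
    c ∈ S.children t → Sum.inr z ∉ S.scope c
  prod_child : ∀ t : S.V, S.isProd t → S.children t ≠ []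
  prod_scope : ∀ t : S.V, S.isProd t →
    (S.children t).Pairwise fun c c' => Disjoint (S.scope c) (S.scope c')
  Q_nonneg : ∀ (t : S.V) (k : ℕ), 0 ≤ S.Q t k
  W_nonneg : ∀ (t : S.V) (k : ℕ), 0 ≤ S.W t k
  Pcond_nonneg : ∀ (t s : S.V) (k j : ℕ), 0 ≤ S.Pcond t s k j
  Punary_nonneg : ∀ (t : S.V) (k : ℕ), 0 ≤ S.Punary t k

/-- The conditional/unary tables of the SPGM are normalized probability tables. -/
structure Normalized (S : SPGM Xvar Zvar Xdom Zdom) : Prop where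
  Pcond_sum : ∀ t s : S.V, S.isVnode t → S.vparent s t → ∀ j < S.domOf s,
    ∑ k ∈ Finset.range (S.domOf t), S.Pcond t s k j = 1
  Punary_sum : ∀ t : S.V, S.isVnode t → (¬ ∃ s, S.vparent s t) →
    ∑ k ∈ Finset.range (S.domOf t), S.Punary t k = 1

/-- Message passing, with explicit fuel (the fuel never runs out thanks to `rank_lt`):
`msgAux S y n t s j` is the message `μ_{t→s;j}` (`s = none` denotes the fictitious root). -/
def msgAux (S : SPGM Xvar Zvar Xdom Zdom) (y : (Xvar ⊕ Zvar) → Option ℕ) :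
    ℕ → S.V → Option S.V → ℕ → ℝ
  | 0, _, _, _ => 1
  | n + 1, t, s, j =>
    match S.kind t with
    | SPGMKind.vnode x =>
        ∑ k ∈ Finset.range (Xdom x),
          (match s with
            | some s' => S.Pcond t s' k j
            | none => S.Punary t k) *
            Indicator y (Sum.inl x) k *
            (match S.children t with
              | [] => (1 : ℝ)
              | c :: _ => msgAux S y n c (some t) k)
    | SPGMKind.prod => ((S.children t).map fun c => msgAux S y n c s j).prod
    | SPGMKind.sumObs z =>
        ∑ k ∈ Finset.range (S.children t).length,
          Indicator y (Sum.inr z) k * S.Q t k * msgAux S y n ((S.children t).getD k t) s j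
    | SPGMKind.sumUnobs =>
        ∑ k ∈ Finset.range (S.children t).length,
          S.W t k * msgAux S y n ((S.children t).getD k t) s j

/-- The message `μ_{t→s;j}` sent by node `t` under partial assignment `y`. -/
def msg (S : SPGM Xvar Zvar Xdom Zdom) (y : (Xvar ⊕ Zvar) → Option ℕ)
    (t : S.V) (s : Option S.V) (j : ℕ) : ℝ :=
  msgAux S y (S.rank t + 1) t s j

/-- Evaluation of the SPGM at the partial assignment `y` (value of the root message). -/
def eval (S : SPGM Xvar Zvar Xdom Zdom) (y : (Xvar ⊕ Zvar) → Option ℕ) : ℝ :=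
  S.msg y S.root none 0

end SPGM

namespace SPGM

variable {Xvar Zvar : Type} {Xdom : Xvar → ℕ} {Zdom : Zvar → ℕ}

/-- Edge of the subtree determined by the choice function `σ`: a Vnode or product node keeps
all its child edges, a sum node `t` keeps only the edge to its `σ t`-th child. -/
def subEdge (S : SPGM Xvar Zvar Xdom Zdom) (σ : S.V → ℕ) (t c : S.V) : Prop :=
  (¬ S.isSum t ∧ c ∈ S.children t) ∨ (S.isSum t ∧ c = (S.children t).getD (σ t) t)

/-- `KeepAt S σ r v`: node `v` is kept in the subtree with root `r` determined by the
choice function `σ`. -/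
inductive KeepAt (S : SPGM Xvar Zvar Xdom Zdom) (σ : S.V → ℕ) : S.V → S.V → Prop where
  | refl (r : S.V) : KeepAt S σ r r
  | step {r t c : S.V} : KeepAt S σ r t → S.subEdge σ t c → KeepAt S σ r c

/-- Node `v` is kept in the subtree of `S` (rooted at the root of `S`) determined by `σ`. -/
def Keep (S : SPGM Xvar Zvar Xdom Zdom) (σ : S.V → ℕ) (v : S.V) : Prop :=
  KeepAt S σ S.root v

/-- The set of subtrees of the sub-SPGM rooted at `r`, represented by their canonical
choice functions: `σ t` is a valid child index at every sum node and is `0` at every node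
that is not a kept sum node.  Distinct canonical choice functions correspond exactly to
distinct subtrees. -/
def subtreesAt (S : SPGM Xvar Zvar Xdom Zdom) (r : S.V) : Set (S.V → ℕ) :=
  {σ | (∀ t : S.V, S.isSum t → σ t < (S.children t).length) ∧
       (∀ t : S.V, ¬ (KeepAt S σ r t ∧ S.isSum t) → σ t = 0)}

/-- The set `T(S)` of subtrees of `S`, represented by canonical choice functions. -/
def subtrees (S : SPGM Xvar Zvar Xdom Zdom) : Set (S.V → ℕ) :=
  S.subtreesAt S.root

/-- Message passing within the subtree determined by `σ` (with fuel, as in `msgAux`):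
at a sum node only the chosen child is used. -/
def msgSubAux (S : SPGM Xvar Zvar Xdom Zdom) (σ : S.V → ℕ)
    (y : (Xvar ⊕ Zvar) → Option ℕ) : ℕ → S.V → Option S.V → ℕ → ℝ
  | 0, _, _, _ => 1
  | n + 1, t, s, j =>
    match S.kind t with
    | SPGMKind.vnode x =>
        ∑ k ∈ Finset.range (Xdom x),
          (match s with
            | some s' => S.Pcond t s' k j
            | none => S.Punary t k) *
            Indicator y (Sum.inl x) k *
            (match S.children t with
              | [] => (1 : ℝ)
              | c :: _ => msgSubAux S σ y n c (some t) k)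
    | SPGMKind.prod => ((S.children t).map fun c => msgSubAux S σ y n c s j).prod
    | SPGMKind.sumObs z =>
        Indicator y (Sum.inr z) (σ t) * S.Q t (σ t) *
          msgSubAux S σ y n ((S.children t).getD (σ t) t) s j
    | SPGMKind.sumUnobs =>
        S.W t (σ t) * msgSubAux S σ y n ((S.children t).getD (σ t) t) s j

/-- The message `μ_{t→s;j}` computed within the subtree determined by `σ`. -/
def msgSub (S : SPGM Xvar Zvar Xdom Zdom) (σ : S.V → ℕ) (y : (Xvar ⊕ Zvar) → Option ℕ)
    (t : S.V) (s : Option S.V) (j : ℕ) : ℝ :=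
  msgSubAux S σ y (S.rank t + 1) t s j

/-- Evaluation of the subtree `τ` of `S` determined by `σ` at the partial assignment `y`. -/
def evalSub (S : SPGM Xvar Zvar Xdom Zdom) (σ : S.V → ℕ)
    (y : (Xvar ⊕ Zvar) → Option ℕ) : ℝ :=
  S.msgSub σ y S.root none 0

/-- An edge of `S` kept in the subtree determined by `σ`. -/
def keptEdge (S : SPGM Xvar Zvar Xdom Zdom) (σ : S.V → ℕ) (t c : S.V) : Prop :=
  S.Keep σ t ∧ S.subEdge σ t c

/-- The underlying undirected (simple) graph of the subtree determined by `σ`: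
vertices are the kept nodes, adjacency is the (undirected) kept-edge relation. -/
def subtreeGraph (S : SPGM Xvar Zvar Xdom Zdom) (σ : S.V → ℕ) : SimpleGraph S.V where
  Adj a b := a ≠ b ∧ S.Keep σ a ∧ S.Keep σ b ∧ (S.keptEdge σ a b ∨ S.keptEdge σ b a)
  symm := by
    constructor
    intro a b h
    exact ⟨Ne.symm h.1, h.2.2.1, h.2.1, h.2.2.2.symm⟩
  loopless := by
    constructor
    intro a h
    exact h.1 rfl

/-- The scope of the subtree determined by `σ`: all variables labeling kept nodes. -/
def subtreeScope (S : SPGM Xvar Zvar Xdom Zdom) (σ : S.V → ℕ) : Set (Xvar ⊕ Zvar) :=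
  {v | ∃ t : S.V, S.Keep σ t ∧ S.label t = some v}

/-- The coefficient `λ_τ` of the subtree determined by `σ`: the product of the weights of
all kept sum nodes. -/
def lam (S : SPGM Xvar Zvar Xdom Zdom) (σ : S.V → ℕ) : ℝ :=
  (∏ t : S.V, if S.Keep σ t ∧ S.isSumObs t then S.Q t (σ t) else 1) *
    (∏ t : S.V, if S.Keep σ t ∧ S.isSumUnobs t then S.W t (σ t) else 1)

/-- The product of the indicator variables in `z_τ` (one for each kept observed sum node),
evaluated relative to the partial assignment `y`. -/
def zInd (S : SPGM Xvar Zvar Xdom Zdom) (σ : S.V → ℕ)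
    (y : (Xvar ⊕ Zvar) → Option ℕ) : ℝ :=
  ∏ t : S.V,
    match S.kind t with
    | SPGMKind.sumObs z => if S.Keep σ t then Indicator y (Sum.inr z) (σ t) else 1
    | _ => 1

/-- Value of a total assignment `x` of the X-variables at a Vnode (`0` at other nodes). -/
def xval (S : SPGM Xvar Zvar Xdom Zdom) (x : Xvar → ℕ) (t : S.V) : ℕ :=
  match S.kind t with
  | SPGMKind.vnode xv => x xv
  | _ => 0

/-- A directed path along edges of the subtree determined by `σ` with no intermediate
Vnode. -/
inductive ReachNoVSub (S : SPGM Xvar Zvar Xdom Zdom) (σ : S.V → ℕ) : S.V → S.V → Prop where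
  | base {s c : S.V} : S.subEdge σ s c → ReachNoVSub S σ s c
  | step {s t c : S.V} : ReachNoVSub S σ s t → ¬ S.isVnode t → S.subEdge σ t c →
      ReachNoVSub S σ s c

/-- `s` is a Vparent of `t` within the subtree determined by `σ`. -/
def vparentSub (S : SPGM Xvar Zvar Xdom Zdom) (σ : S.V → ℕ) (s t : S.V) : Prop :=
  S.isVnode s ∧ ReachNoVSub S σ s t

/-- The tree graphical model distribution `P_τ` of the subtree determined by `σ`, as a
function of a total assignment `x` of the X-variables: the product of the unary tables of
the kept Vnodes without Vparent in the subtree and of the conditional tables of all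
Vparent-child Vnode pairs of the subtree. -/
def Ptau (S : SPGM Xvar Zvar Xdom Zdom) (σ : S.V → ℕ) (x : Xvar → ℕ) : ℝ :=
  (∏ t : S.V,
      if S.Keep σ t ∧ S.isVnode t ∧ ¬ (∃ s, S.Keep σ s ∧ S.vparentSub σ s t) then
        S.Punary t (S.xval x t)
      else 1) *
    ∏ p : S.V × S.V,
      if S.Keep σ p.1 ∧ S.Keep σ p.2 ∧ S.isVnode p.2 ∧ S.vparentSub σ p.1 p.2 then
        S.Pcond p.2 p.1 (S.xval x p.2) (S.xval x p.1)
      else 1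

/-- The number of edges of the DAG underlying `S`. -/
def edgeCount (S : SPGM Xvar Zvar Xdom Zdom) : ℕ :=
  ∑ v : S.V, (S.children v).length

end SPGM

namespace SPGM

variable {Xvar Zvar : Type} {Xdom : Xvar → ℕ} {Zdom : Zvar → ℕ}
variable (S : SPGM Xvar Zvar Xdom Zdom)

/-- Subtrees determined by a list of roots with node-disjoint sub-DAGs. -/
def subtreesL (L : List S.V) : Set (S.V → ℕ) :=
  {σ | (∀ t : S.V, S.isSum t → σ t < (S.children t).length) ∧
       (∀ t : S.V, ¬ ((∃ c ∈ L, S.KeepAt σ c t) ∧ S.isSum t) → σ t = 0)}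

lemma reach_rank {a b : S.V} (h : S.Reach a b) : S.rank b ≤ S.rank a := by
  induction h with
  | refl => exact le_refl _
  | tail _ hbc ih => exact le_trans (le_of_lt (S.rank_lt _ _ hbc)) ih

lemma reach_of_child {t c : S.V} (h : c ∈ S.children t) : S.Reach t c :=
  Relation.ReflTransGen.single h

lemma scope_mono {t u : S.V} (h : S.Reach t u) : S.scope u ⊆ S.scope t := by
  rintro v ⟨w, hw, hl⟩
  exact ⟨w, h.trans hw, hl⟩

lemma scope_nonempty (hS : S.Valid) : ∀ t : S.V, (S.scope t).Nonempty := by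
  have key : ∀ n (t : S.V), S.rank t < n → (S.scope t).Nonempty := by
    intro n
    induction n with
    | zero => intro t h; exact absurd h (Nat.not_lt_zero _)
    | succ n ih =>
      intro t ht
      cases hk : S.kind t with
      | vnode x =>
        exact ⟨Sum.inl x, t, Relation.ReflTransGen.refl, by simp [label, hk]⟩
      | sumObs z =>
        exact ⟨Sum.inr z, t, Relation.ReflTransGen.refl, by simp [label, hk]⟩
      | prod =>
        obtain ⟨c, hc⟩ := List.exists_mem_of_ne_nil _ (hS.prod_child t hk)
        obtain ⟨v, hv⟩ := ih c (by have := S.rank_lt t c hc; omega)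
        exact ⟨v, S.scope_mono (S.reach_of_child hc) hv⟩
      | sumUnobs =>
        obtain ⟨c, hc⟩ := List.exists_mem_of_ne_nil _ (hS.sum_child t (Or.inr hk))
        obtain ⟨v, hv⟩ := ih c (by have := S.rank_lt t c hc; omega)
        exact ⟨v, S.scope_mono (S.reach_of_child hc) hv⟩
  exact fun t => key (S.rank t + 1) t (Nat.lt_succ_self _)

lemma reach_disjoint (hS : S.Valid) {c c' : S.V}
    (h : Disjoint (S.scope c) (S.scope c')) {u : S.V}
    (h1 : S.Reach c u) (h2 : S.Reach c' u) : False := by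
  obtain ⟨v, hv⟩ := S.scope_nonempty hS u
  exact Set.disjoint_left.mp h (S.scope_mono h1 hv) (S.scope_mono h2 hv)

lemma subEdge_mem {σ : S.V → ℕ} {t c : S.V} (h : S.subEdge σ t c) :
    c ∈ S.children t ∨ c = t := by
  rcases h with ⟨-, hc⟩ | ⟨-, hc⟩
  · exact Or.inl hc
  · by_cases hlt : σ t < (S.children t).length
    · left; rw [hc, List.getD_eq_getElem _ _ hlt]; exact List.getElem_mem _
    · right; rw [hc, List.getD_eq_default _ _ (le_of_not_gt hlt)]

lemma reach_getD (t : S.V) (k : ℕ) : S.Reach t ((S.children t).getD k t) := by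
  by_cases hlt : k < (S.children t).length
  · rw [List.getD_eq_getElem _ _ hlt]
    exact S.reach_of_child (List.getElem_mem _)
  · rw [List.getD_eq_default _ _ (le_of_not_gt hlt)]
    exact Relation.ReflTransGen.refl

lemma keepAt_reach {σ : S.V → ℕ} {r u : S.V} (h : S.KeepAt σ r u) : S.Reach r u := by
  induction h with
  | refl => exact Relation.ReflTransGen.refl
  | step _ he ih =>
    rcases S.subEdge_mem he with hm | hm
    · exact ih.trans (Relation.ReflTransGen.single hm)
    · rwa [hm]

lemma keepAt_trans {σ : S.V → ℕ} {a b c : S.V} (h1 : S.KeepAt σ a b)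
    (h2 : S.KeepAt σ b c) : S.KeepAt σ a c := by
  induction h2 with
  | refl => exact h1
  | step _ he ih => exact KeepAt.step ih he

lemma subEdge_congr {σ σ' : S.V → ℕ} {t c : S.V} (h : σ t = σ' t) :
    S.subEdge σ t c ↔ S.subEdge σ' t c := by
  unfold subEdge; rw [h]

lemma keepAt_congr {σ σ' : S.V → ℕ} {r : S.V} (h : ∀ u, S.Reach r u → σ u = σ' u) :
    ∀ u, S.KeepAt σ r u → S.KeepAt σ' r u := by
  intro u hu
  induction hu with
  | refl => exact KeepAt.refl _
  | step hk he ih =>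
    exact KeepAt.step ih ((S.subEdge_congr (h _ (S.keepAt_reach hk))).mp he)

lemma keepAt_congr_iff {σ σ' : S.V → ℕ} {r : S.V} (h : ∀ u, S.Reach r u → σ u = σ' u)
    (u : S.V) : S.KeepAt σ r u ↔ S.KeepAt σ' r u :=
  ⟨S.keepAt_congr h u, S.keepAt_congr (fun u hu => (h u hu).symm) u⟩

lemma msgSubAux_congr (y : (Xvar ⊕ Zvar) → Option ℕ) :
    ∀ (n : ℕ) {σ σ' : S.V → ℕ} (t : S.V), (∀ u, S.Reach t u → σ u = σ' u) →
      ∀ (s : Option S.V) (j : ℕ), msgSubAux S σ y n t s j = msgSubAux S σ' y n t s j := by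
  intro n
  induction n with
  | zero => intros; rfl
  | succ n ih =>
    intro σ σ' t h s j
    have hself : σ t = σ' t := h t Relation.ReflTransGen.refl
    have hch : ∀ c ∈ S.children t, ∀ u, S.Reach c u → σ u = σ' u :=
      fun c hc u hu => h u ((S.reach_of_child hc).trans hu)
    have hgd : ∀ k, ∀ u, S.Reach ((S.children t).getD k t) u → σ u = σ' u :=
      fun k u hu => h u ((S.reach_getD t k).trans hu)
    cases hk : S.kind t with
    | vnode x =>
      cases hc : S.children t with
      | nil => simp only [msgSubAux, hk, hc]
      | cons c cs =>
        simp only [msgSubAux, hk, hc]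
        refine Finset.sum_congr rfl fun k _ => ?_
        rw [ih c (hch c (hc ▸ List.mem_cons_self (a := c) (l := cs)))]
    | prod =>
      simp only [msgSubAux, hk]
      congr 1
      exact List.map_congr_left fun c hc => ih c (hch c hc) s j
    | sumObs z =>
      simp only [msgSubAux, hk]
      rw [hself, ih _ (hgd (σ' t))]
    | sumUnobs =>
      simp only [msgSubAux, hk]
      rw [hself, ih _ (hgd (σ' t))]

lemma msgSub_congr (y : (Xvar ⊕ Zvar) → Option ℕ) {σ σ' : S.V → ℕ} {t : S.V}
    (h : ∀ u, S.Reach t u → σ u = σ' u) (s : Option S.V) (j : ℕ) :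
    S.msgSub σ y t s j = S.msgSub σ' y t s j :=
  S.msgSubAux_congr y _ t h s j

lemma msgAux_fuel (y : (Xvar ⊕ Zvar) → Option ℕ) :
    ∀ (n m : ℕ) (t : S.V), S.rank t < n → S.rank t < m →
      ∀ (s : Option S.V) (j : ℕ), msgAux S y n t s j = msgAux S y m t s j := by
  intro n
  induction n with
  | zero => intro m t h; exact absurd h (Nat.not_lt_zero _)
  | succ n ih =>
    intro m t hn hm s j
    obtain ⟨m, rfl⟩ : ∃ m', m = m' + 1 := ⟨m - 1, by omega⟩
    have hr : ∀ c ∈ S.children t, S.rank c < n ∧ S.rank c < m := fun c hc => by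
      have := S.rank_lt t c hc; omega
    cases hk : S.kind t with
    | vnode x =>
      cases hc : S.children t with
      | nil => simp only [msgAux, hk, hc]
      | cons c cs =>
        simp only [msgAux, hk, hc]
        refine Finset.sum_congr rfl fun k _ => ?_
        have hcc := hr c (hc ▸ List.mem_cons_self (a := c) (l := cs))
        rw [ih m c hcc.1 hcc.2]
    | prod =>
      simp only [msgAux, hk]
      congr 1
      exact List.map_congr_left fun c hc => ih m c (hr c hc).1 (hr c hc).2 s j
    | sumObs z =>
      simp only [msgAux, hk]
      refine Finset.sum_congr rfl fun k hkm => ?_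
      have hkl : k < (S.children t).length := Finset.mem_range.mp hkm
      have hmem : (S.children t).getD k t ∈ S.children t := by
        rw [List.getD_eq_getElem _ _ hkl]; exact List.getElem_mem _
      rw [ih m _ (hr _ hmem).1 (hr _ hmem).2]
    | sumUnobs =>
      simp only [msgAux, hk]
      refine Finset.sum_congr rfl fun k hkm => ?_
      have hkl : k < (S.children t).length := Finset.mem_range.mp hkm
      have hmem : (S.children t).getD k t ∈ S.children t := by
        rw [List.getD_eq_getElem _ _ hkl]; exact List.getElem_mem _
      rw [ih m _ (hr _ hmem).1 (hr _ hmem).2]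

lemma msgSubAux_fuel (y : (Xvar ⊕ Zvar) → Option ℕ) {σ : S.V → ℕ}
    (hσ : ∀ u, S.isSum u → σ u < (S.children u).length) :
    ∀ (n m : ℕ) (t : S.V), S.rank t < n → S.rank t < m →
      ∀ (s : Option S.V) (j : ℕ), msgSubAux S σ y n t s j = msgSubAux S σ y m t s j := by
  intro n
  induction n with
  | zero => intro m t h; exact absurd h (Nat.not_lt_zero _)
  | succ n ih =>
    intro m t hn hm s j
    obtain ⟨m, rfl⟩ : ∃ m', m = m' + 1 := ⟨m - 1, by omega⟩
    have hr : ∀ c ∈ S.children t, S.rank c < n ∧ S.rank c < m := fun c hc => by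
      have := S.rank_lt t c hc; omega
    cases hk : S.kind t with
    | vnode x =>
      cases hc : S.children t with
      | nil => simp only [msgSubAux, hk, hc]
      | cons c cs =>
        simp only [msgSubAux, hk, hc]
        refine Finset.sum_congr rfl fun k _ => ?_
        have hcc := hr c (hc ▸ List.mem_cons_self (a := c) (l := cs))
        rw [ih m c hcc.1 hcc.2]
    | prod =>
      simp only [msgSubAux, hk]
      congr 1
      exact List.map_congr_left fun c hc => ih m c (hr c hc).1 (hr c hc).2 s j
    | sumObs z =>
      simp only [msgSubAux, hk]
      have hlt : σ t < (S.children t).length := hσ t (Or.inl ⟨z, hk⟩)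
      have hmem : (S.children t).getD (σ t) t ∈ S.children t := by
        rw [List.getD_eq_getElem _ _ hlt]; exact List.getElem_mem _
      rw [ih m _ (hr _ hmem).1 (hr _ hmem).2]
    | sumUnobs =>
      simp only [msgSubAux, hk]
      have hlt : σ t < (S.children t).length := hσ t (Or.inr hk)
      have hmem : (S.children t).getD (σ t) t ∈ S.children t := by
        rw [List.getD_eq_getElem _ _ hlt]; exact List.getElem_mem _
      rw [ih m _ (hr _ hmem).1 (hr _ hmem).2]

lemma finite_bounded : {σ : S.V → ℕ | ∀ u, σ u < (S.children u).length + 1}.Finite := by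
  refine Set.Finite.subset
    (Set.Finite.pi (fun u : S.V => Set.finite_Iio ((S.children u).length + 1))) ?_
  intro σ hσ
  rw [Set.mem_univ_pi]
  exact fun u => hσ u

lemma subtreesAt_finite (r : S.V) : (S.subtreesAt r).Finite := by
  refine S.finite_bounded.subset ?_
  rintro σ ⟨h1, h2⟩
  simp only [Set.mem_setOf_eq]
  intro u
  by_cases h : S.KeepAt σ r u ∧ S.isSum u
  · have := h1 u h.2; omega
  · have := h2 u h; omega

lemma subtreesL_finite (L : List S.V) : (S.subtreesL L).Finite := by
  refine S.finite_bounded.subset ?_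
  rintro σ ⟨h1, h2⟩
  simp only [Set.mem_setOf_eq]
  intro u
  by_cases h : (∃ c ∈ L, S.KeepAt σ c u) ∧ S.isSum u
  · have := h1 u h.2; omega
  · have := h2 u h; omega

lemma keepAt_nonsum_iff {σ : S.V → ℕ} {t : S.V} (ht : ¬ S.isSum t) (u : S.V) :
    S.KeepAt σ t u ↔ u = t ∨ ∃ c ∈ S.children t, S.KeepAt σ c u := by
  constructor
  · intro h
    induction h with
    | refl => exact Or.inl rfl
    | step hkp he ih =>
      rcases ih with rfl | ⟨c, hc, hkc⟩
      · rcases he with ⟨-, hm⟩ | ⟨hs, -⟩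
        · exact Or.inr ⟨_, hm, KeepAt.refl _⟩
        · exact absurd hs ht
      · exact Or.inr ⟨c, hc, hkc.step he⟩
  · rintro (rfl | ⟨c, hc, hkc⟩)
    · exact KeepAt.refl _
    · exact S.keepAt_trans (KeepAt.step (KeepAt.refl t) (Or.inl ⟨ht, hc⟩)) hkc

lemma keepAt_sum_iff {σ : S.V → ℕ} {t c : S.V} (ht : S.isSum t)
    (hc : (S.children t).getD (σ t) t = c) (u : S.V) :
    S.KeepAt σ t u ↔ u = t ∨ S.KeepAt σ c u := by
  subst hc
  constructor
  · intro h
    induction h with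
    | refl => exact Or.inl rfl
    | step hkp he ih =>
      rcases ih with rfl | hkc
      · rcases he with ⟨hns, -⟩ | ⟨-, hq⟩
        · exact absurd ht hns
        · subst hq; exact Or.inr (KeepAt.refl _)
      · exact Or.inr (hkc.step he)
  · rintro (rfl | hkc)
    · exact KeepAt.refl _
    · exact S.keepAt_trans (KeepAt.step (KeepAt.refl t) (Or.inr ⟨ht, rfl⟩)) hkc

lemma subtreesAt_eq_subtreesL {t : S.V} (hns : ¬ S.isSum t) :
    S.subtreesAt t = S.subtreesL (S.children t) := by
  ext σ
  have hkeep : ∀ u, S.KeepAt σ t u ↔ u = t ∨ ∃ c ∈ S.children t, S.KeepAt σ c u :=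
    S.keepAt_nonsum_iff hns
  constructor
  · rintro ⟨h1, h2⟩
    refine ⟨h1, fun u hu => ?_⟩
    apply h2
    rintro ⟨hkp, hs⟩
    rcases (hkeep u).mp hkp with rfl | hkc
    · exact hns hs
    · exact hu ⟨hkc, hs⟩
  · rintro ⟨h1, h2⟩
    refine ⟨h1, fun u hu => ?_⟩
    apply h2
    rintro ⟨hkc, hs⟩
    exact hu ⟨(hkeep u).mpr (Or.inr hkc), hs⟩

lemma subtreesL_nil (hS : S.Valid) : S.subtreesL ([] : List S.V) = {fun _ => 0} := by
  ext σ
  simp only [subtreesL, Set.mem_setOf_eq, Set.mem_singleton_iff]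
  constructor
  · rintro ⟨h1, h2⟩
    funext u
    apply h2
    rintro ⟨⟨c, hc, -⟩, -⟩
    simp at hc
  · rintro rfl
    exact ⟨fun u hu => List.length_pos_iff.mpr (hS.sum_child u hu), fun u _ => rfl⟩

lemma subtreesL_singleton (c : S.V) : S.subtreesL [c] = S.subtreesAt c := by
  ext σ
  unfold subtreesL subtreesAt
  simp only [Set.mem_setOf_eq, List.mem_singleton, exists_eq_left]

lemma update_agree {t c : S.V} (hc : c ∈ S.children t) (σ : S.V → ℕ) (v : ℕ) :
    ∀ u, S.Reach c u → σ u = Function.update σ t v u := by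
  intro u hu
  have h1 := S.reach_rank hu
  have h2 := S.rank_lt t c hc
  have hne : u ≠ t := by rintro rfl; omega
  rw [Function.update_of_ne hne]

lemma sigma_root_eq_zero {t c : S.V} (hc : c ∈ S.children t) {σ : S.V → ℕ}
    (hσ : σ ∈ S.subtreesAt c) : σ t = 0 := by
  apply hσ.2
  rintro ⟨hk, -⟩
  have h1 := S.reach_rank (S.keepAt_reach hk)
  have h2 := S.rank_lt t c hc
  omega

lemma mem_subtreesAt_sum_elim {t : S.V} (hsum : S.isSum t) {σ : S.V → ℕ}
    (hσ : σ ∈ S.subtreesAt t) :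
    Function.update σ t 0 ∈ S.subtreesAt ((S.children t).getD (σ t) t) := by
  obtain ⟨h1, h2⟩ := hσ
  have hlt : σ t < (S.children t).length := h1 t hsum
  have hcm : (S.children t).getD (σ t) t ∈ S.children t := by
    rw [List.getD_eq_getElem _ _ hlt]; exact List.getElem_mem _
  have hagree : ∀ u, S.Reach ((S.children t).getD (σ t) t) u →
      σ u = Function.update σ t 0 u := S.update_agree hcm σ 0
  constructor
  · intro u hu
    by_cases h : u = t
    · subst h; rw [Function.update_self]; omega
    · rw [Function.update_of_ne h]; exact h1 u hu
  · intro u hu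
    by_cases h : u = t
    · subst h; rw [Function.update_self]
    · rw [Function.update_of_ne h]
      apply h2
      rintro ⟨hkp, hs⟩
      apply hu
      refine ⟨?_, hs⟩
      rcases (S.keepAt_sum_iff hsum rfl u).mp hkp with rfl | hkc
      · exact absurd rfl h
      · exact (S.keepAt_congr_iff hagree u).mp hkc

lemma mem_subtreesAt_sum_intro {t : S.V} (hsum : S.isSum t) {k : ℕ}
    (hk : k < (S.children t).length) {σ : S.V → ℕ}
    (hσ : σ ∈ S.subtreesAt ((S.children t).getD k t)) :
    Function.update σ t k ∈ S.subtreesAt t := by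
  obtain ⟨h1, h2⟩ := hσ
  have hcm : (S.children t).getD k t ∈ S.children t := by
    rw [List.getD_eq_getElem _ _ hk]; exact List.getElem_mem _
  have hagree : ∀ u, S.Reach ((S.children t).getD k t) u →
      σ u = Function.update σ t k u := S.update_agree hcm σ k
  constructor
  · intro u hu
    by_cases h : u = t
    · subst h; rwa [Function.update_self]
    · rw [Function.update_of_ne h]; exact h1 u hu
  · intro u hu
    by_cases h : u = t
    · subst h; exact absurd ⟨KeepAt.refl _, hsum⟩ hu
    · rw [Function.update_of_ne h]
      apply h2
      rintro ⟨hkc, hs⟩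
      apply hu
      refine ⟨?_, hs⟩
      have hkc' : S.KeepAt (Function.update σ t k) ((S.children t).getD k t) u :=
        (S.keepAt_congr_iff hagree u).mp hkc
      have hupd : (S.children t).getD (Function.update σ t k t) t =
          (S.children t).getD k t := by rw [Function.update_self]
      exact (S.keepAt_sum_iff hsum hupd u).mpr (Or.inr hkc')

section StepLemmas

variable {t : S.V} {σ : S.V → ℕ} {y : (Xvar ⊕ Zvar) → Option ℕ} {s : Option S.V} {j : ℕ}

lemma msg_vnode_nil {x : Xvar} (hk : S.kind t = .vnode x) (hc : S.children t = []) :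
    S.msg y t s j = ∑ k ∈ Finset.range (Xdom x),
      (match s with | some s' => S.Pcond t s' k j | none => S.Punary t k) *
        Indicator y (Sum.inl x) k * 1 := by
  show msgAux S y (S.rank t + 1) t s j = _
  simp only [msgAux, hk, hc]

lemma msgSub_vnode_nil {x : Xvar} (hk : S.kind t = .vnode x) (hc : S.children t = []) :
    S.msgSub σ y t s j = ∑ k ∈ Finset.range (Xdom x),
      (match s with | some s' => S.Pcond t s' k j | none => S.Punary t k) *
        Indicator y (Sum.inl x) k * 1 := by
  show msgSubAux S σ y (S.rank t + 1) t s j = _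
  simp only [msgSubAux, hk, hc]

lemma msg_vnode_cons {x : Xvar} {c : S.V} {cs : List S.V}
    (hk : S.kind t = .vnode x) (hc : S.children t = c :: cs) (hr : S.rank c < S.rank t) :
    S.msg y t s j = ∑ k ∈ Finset.range (Xdom x),
      (match s with | some s' => S.Pcond t s' k j | none => S.Punary t k) *
        Indicator y (Sum.inl x) k * S.msg y c (some t) k := by
  show msgAux S y (S.rank t + 1) t s j = _
  simp only [msgAux, hk, hc]
  refine Finset.sum_congr rfl fun k _ => ?_
  rw [S.msgAux_fuel y _ _ c hr (Nat.lt_succ_self _) (some t) k]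
  rfl

lemma msgSub_vnode_cons {x : Xvar} {c : S.V} {cs : List S.V}
    (hk : S.kind t = .vnode x) (hc : S.children t = c :: cs) (hr : S.rank c < S.rank t)
    (hσ : ∀ u, S.isSum u → σ u < (S.children u).length) :
    S.msgSub σ y t s j = ∑ k ∈ Finset.range (Xdom x),
      (match s with | some s' => S.Pcond t s' k j | none => S.Punary t k) *
        Indicator y (Sum.inl x) k * S.msgSub σ y c (some t) k := by
  show msgSubAux S σ y (S.rank t + 1) t s j = _
  simp only [msgSubAux, hk, hc]
  refine Finset.sum_congr rfl fun k _ => ?_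
  rw [S.msgSubAux_fuel y hσ _ _ c hr (Nat.lt_succ_self _) (some t) k]
  rfl

lemma msg_prod (hk : S.kind t = .prod) :
    S.msg y t s j = ((S.children t).map fun c => S.msg y c s j).prod := by
  show msgAux S y (S.rank t + 1) t s j = _
  simp only [msgAux, hk]
  congr 1
  exact List.map_congr_left fun c hc =>
    S.msgAux_fuel y _ _ c (S.rank_lt t c hc) (Nat.lt_succ_self _) s j

lemma msgSub_prod (hk : S.kind t = .prod)
    (hσ : ∀ u, S.isSum u → σ u < (S.children u).length) :
    S.msgSub σ y t s j = ((S.children t).map fun c => S.msgSub σ y c s j).prod := by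
  show msgSubAux S σ y (S.rank t + 1) t s j = _
  simp only [msgSubAux, hk]
  congr 1
  exact List.map_congr_left fun c hc =>
    S.msgSubAux_fuel y hσ _ _ c (S.rank_lt t c hc) (Nat.lt_succ_self _) s j

lemma msg_sumObs {z : Zvar} (hk : S.kind t = .sumObs z) :
    S.msg y t s j = ∑ k ∈ Finset.range (S.children t).length,
      Indicator y (Sum.inr z) k * S.Q t k * S.msg y ((S.children t).getD k t) s j := by
  show msgAux S y (S.rank t + 1) t s j = _
  simp only [msgAux, hk]
  refine Finset.sum_congr rfl fun k hkm => ?_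
  have hkl : k < (S.children t).length := Finset.mem_range.mp hkm
  have hmem : (S.children t).getD k t ∈ S.children t := by
    rw [List.getD_eq_getElem _ _ hkl]; exact List.getElem_mem _
  rw [S.msgAux_fuel y _ _ _ (S.rank_lt t _ hmem) (Nat.lt_succ_self _) s j]
  rfl

lemma msg_sumUnobs (hk : S.kind t = .sumUnobs) :
    S.msg y t s j = ∑ k ∈ Finset.range (S.children t).length,
      S.W t k * S.msg y ((S.children t).getD k t) s j := by
  show msgAux S y (S.rank t + 1) t s j = _
  simp only [msgAux, hk]
  refine Finset.sum_congr rfl fun k hkm => ?_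
  have hkl : k < (S.children t).length := Finset.mem_range.mp hkm
  have hmem : (S.children t).getD k t ∈ S.children t := by
    rw [List.getD_eq_getElem _ _ hkl]; exact List.getElem_mem _
  rw [S.msgAux_fuel y _ _ _ (S.rank_lt t _ hmem) (Nat.lt_succ_self _) s j]
  rfl

lemma msgSub_sumObs {z : Zvar} (hk : S.kind t = .sumObs z)
    (hσ : ∀ u, S.isSum u → σ u < (S.children u).length) :
    S.msgSub σ y t s j = Indicator y (Sum.inr z) (σ t) * S.Q t (σ t) *
      S.msgSub σ y ((S.children t).getD (σ t) t) s j := by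
  show msgSubAux S σ y (S.rank t + 1) t s j = _
  simp only [msgSubAux, hk]
  have hlt : σ t < (S.children t).length := hσ t (Or.inl ⟨z, hk⟩)
  have hmem : (S.children t).getD (σ t) t ∈ S.children t := by
    rw [List.getD_eq_getElem _ _ hlt]; exact List.getElem_mem _
  rw [S.msgSubAux_fuel y hσ _ _ _ (S.rank_lt t _ hmem) (Nat.lt_succ_self _) s j]
  rfl

lemma msgSub_sumUnobs (hk : S.kind t = .sumUnobs)
    (hσ : ∀ u, S.isSum u → σ u < (S.children u).length) :
    S.msgSub σ y t s j = S.W t (σ t) *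
      S.msgSub σ y ((S.children t).getD (σ t) t) s j := by
  show msgSubAux S σ y (S.rank t + 1) t s j = _
  simp only [msgSubAux, hk]
  have hlt : σ t < (S.children t).length := hσ t (Or.inr hk)
  have hmem : (S.children t).getD (σ t) t ∈ S.children t := by
    rw [List.getD_eq_getElem _ _ hlt]; exact List.getElem_mem _
  rw [S.msgSubAux_fuel y hσ _ _ _ (S.rank_lt t _ hmem) (Nat.lt_succ_self _) s j]
  rfl

end StepLemmas

lemma combine_mem_cons (hS : S.Valid) {c : S.V} {L : List S.V}
    (hdis : ∀ c' ∈ L, Disjoint (S.scope c) (S.scope c'))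
    {σ1 σ2 : S.V → ℕ} (h1 : σ1 ∈ S.subtreesAt c) (h2 : σ2 ∈ S.subtreesL L) :
    (fun u => if S.Reach c u then σ1 u else σ2 u) ∈ S.subtreesL (c :: L) := by
  have hnr : ∀ c' ∈ L, ∀ u, S.Reach c u → S.Reach c' u → False :=
    fun c' hc' u ha hb => S.reach_disjoint hS (hdis c' hc') ha hb
  have hag1 : ∀ u, S.Reach c u → σ1 u = (fun u => if S.Reach c u then σ1 u else σ2 u) u :=
    fun u hu => (if_pos hu).symm
  have hag2 : ∀ c' ∈ L, ∀ u, S.Reach c' u →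
      σ2 u = (fun u => if S.Reach c u then σ1 u else σ2 u) u :=
    fun c' hc' u hu => (if_neg (fun h => hnr c' hc' u h hu)).symm
  refine ⟨fun u hu => ?_, fun u hu => ?_⟩
  · by_cases h : S.Reach c u
    · simpa [h] using h1.1 u hu
    · simpa [h] using h2.1 u hu
  · by_cases h : S.Reach c u
    · show (if S.Reach c u then σ1 u else σ2 u) = 0
      rw [if_pos h]
      apply h1.2
      rintro ⟨hkp, hs⟩
      exact hu ⟨⟨c, List.mem_cons_self, (S.keepAt_congr_iff hag1 u).mp hkp⟩, hs⟩
    · show (if S.Reach c u then σ1 u else σ2 u) = 0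
      rw [if_neg h]
      apply h2.2
      rintro ⟨⟨c', hc', hkp⟩, hs⟩
      exact hu ⟨⟨c', List.mem_cons_of_mem _ hc',
        (S.keepAt_congr_iff (hag2 c' hc') u).mp hkp⟩, hs⟩

lemma decompose_mem_left (hS : S.Valid) {c : S.V} {L : List S.V}
    (hdis : ∀ c' ∈ L, Disjoint (S.scope c) (S.scope c'))
    {σ : S.V → ℕ} (hσ : σ ∈ S.subtreesL (c :: L)) :
    (fun u => if S.Reach c u then σ u else 0) ∈ S.subtreesAt c := by
  have hnr : ∀ c' ∈ L, ∀ u, S.Reach c u → S.Reach c' u → False :=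
    fun c' hc' u ha hb => S.reach_disjoint hS (hdis c' hc') ha hb
  refine ⟨fun u hu => ?_, fun u hu => ?_⟩
  · by_cases h : S.Reach c u
    · simpa [h] using hσ.1 u hu
    · simpa [h] using List.length_pos_iff.mpr (hS.sum_child u hu)
  · by_cases h : S.Reach c u
    · show (if S.Reach c u then σ u else 0) = 0
      rw [if_pos h]
      apply hσ.2
      rintro ⟨⟨c'', hc'', hkp⟩, hs⟩
      rcases List.mem_cons.mp hc'' with rfl | hc''L
      · exact hu ⟨S.keepAt_congr (fun u' hu' => (if_pos hu').symm) u hkp, hs⟩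
      · exact hnr c'' hc''L u h (S.keepAt_reach hkp)
    · show (if S.Reach c u then σ u else 0) = 0
      rw [if_neg h]

lemma decompose_mem_right (hS : S.Valid) {c : S.V} {L : List S.V}
    (hdis : ∀ c' ∈ L, Disjoint (S.scope c) (S.scope c'))
    {σ : S.V → ℕ} (hσ : σ ∈ S.subtreesL (c :: L)) :
    (fun u => if S.Reach c u then 0 else σ u) ∈ S.subtreesL L := by
  have hnr : ∀ c' ∈ L, ∀ u, S.Reach c u → S.Reach c' u → False :=
    fun c' hc' u ha hb => S.reach_disjoint hS (hdis c' hc') ha hb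
  refine ⟨fun u hu => ?_, fun u hu => ?_⟩
  · by_cases h : S.Reach c u
    · simpa [h] using List.length_pos_iff.mpr (hS.sum_child u hu)
    · simpa [h] using hσ.1 u hu
  · by_cases h : S.Reach c u
    · show (if S.Reach c u then 0 else σ u) = 0
      rw [if_pos h]
    · show (if S.Reach c u then 0 else σ u) = 0
      rw [if_neg h]
      apply hσ.2
      rintro ⟨⟨c'', hc'', hkp⟩, hs⟩
      rcases List.mem_cons.mp hc'' with rfl | hc''L
      · exact h (S.keepAt_reach hkp)
      · refine hu ⟨⟨c'', hc''L, ?_⟩, hs⟩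
        refine S.keepAt_congr (fun u' hu' => ?_) u hkp
        exact (if_neg (fun hh => hnr c'' hc''L u' hh hu')).symm

lemma sigma_zero_of_not_reach {c : S.V} {σ : S.V → ℕ} (hσ : σ ∈ S.subtreesAt c)
    {u : S.V} (h : ¬ S.Reach c u) : σ u = 0 := by
  apply hσ.2
  rintro ⟨hk, -⟩
  exact h (S.keepAt_reach hk)

lemma sigmaL_zero_of_reach (hS : S.Valid) {c : S.V} {L : List S.V}
    (hdis : ∀ c' ∈ L, Disjoint (S.scope c) (S.scope c'))
    {σ : S.V → ℕ} (hσ : σ ∈ S.subtreesL L) {u : S.V} (h : S.Reach c u) : σ u = 0 := by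
  apply hσ.2
  rintro ⟨⟨c', hc', hk⟩, -⟩
  exact S.reach_disjoint hS (hdis c' hc') h (S.keepAt_reach hk)

lemma key_prod (hS : S.Valid) (y : (Xvar ⊕ Zvar) → Option ℕ) :
    ∀ L : List S.V, (L.Pairwise fun c c' => Disjoint (S.scope c) (S.scope c')) →
      (∀ c ∈ L, ∀ (s : Option S.V) (j : ℕ),
        S.msg y c s j = ∑ σ ∈ (S.subtreesAt_finite c).toFinset, S.msgSub σ y c s j) →
      ∀ (s : Option S.V) (j : ℕ),
        ∑ σ ∈ (S.subtreesL_finite L).toFinset, (L.map fun c => S.msgSub σ y c s j).prod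
          = (L.map fun c => S.msg y c s j).prod := by
  intro L
  induction L with
  | nil =>
    intro _ _ s j
    have h0 : (S.subtreesL_finite ([] : List S.V)).toFinset = {fun _ => 0} := by
      ext σ
      rw [Set.Finite.mem_toFinset, S.subtreesL_nil hS]
      simp only [Set.mem_singleton_iff, Finset.mem_singleton]
    simp [h0]
  | cons c L ihL =>
    intro hpw hall s j
    rw [List.pairwise_cons] at hpw
    obtain ⟨hdis, hpw'⟩ := hpw
    have hall' : ∀ c' ∈ L, ∀ (s : Option S.V) (j : ℕ),
        S.msg y c' s j = ∑ σ ∈ (S.subtreesAt_finite c').toFinset, S.msgSub σ y c' s j :=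
      fun c' hc' => hall c' (List.mem_cons_of_mem _ hc')
    have hnr : ∀ c' ∈ L, ∀ u, S.Reach c u → S.Reach c' u → False :=
      fun c' hc' u ha hb => S.reach_disjoint hS (hdis c' hc') ha hb
    have himg : (S.subtreesL_finite (c :: L)).toFinset =
        ((S.subtreesAt_finite c).toFinset ×ˢ (S.subtreesL_finite L).toFinset).image
          (fun p => fun u => if S.Reach c u then p.1 u else p.2 u) := by
      ext σ
      simp only [Set.Finite.mem_toFinset, Finset.mem_image, Finset.mem_product]
      constructor
      · intro hσ
        refine ⟨(fun u => if S.Reach c u then σ u else 0,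
          fun u => if S.Reach c u then 0 else σ u),
          ⟨S.decompose_mem_left hS hdis hσ, S.decompose_mem_right hS hdis hσ⟩, ?_⟩
        funext u
        by_cases h : S.Reach c u <;> simp [h]
      · rintro ⟨⟨σ1, σ2⟩, ⟨h1, h2⟩, rfl⟩
        exact S.combine_mem_cons hS hdis h1 h2
    have hinj : ∀ p ∈ (S.subtreesAt_finite c).toFinset ×ˢ (S.subtreesL_finite L).toFinset,
        ∀ q ∈ (S.subtreesAt_finite c).toFinset ×ˢ (S.subtreesL_finite L).toFinset,
        (fun u => if S.Reach c u then p.1 u else p.2 u) =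
          (fun u => if S.Reach c u then q.1 u else q.2 u) → p = q := by
      intro p hp q hq hpq
      simp only [Finset.mem_product, Set.Finite.mem_toFinset] at hp hq
      have h1 : p.1 = q.1 := by
        funext u
        by_cases h : S.Reach c u
        · have := congrFun hpq u; simpa [h] using this
        · rw [S.sigma_zero_of_not_reach hp.1 h, S.sigma_zero_of_not_reach hq.1 h]
      have h2 : p.2 = q.2 := by
        funext u
        by_cases h : S.Reach c u
        · rw [S.sigmaL_zero_of_reach hS hdis hp.2 h, S.sigmaL_zero_of_reach hS hdis hq.2 h]
        · have := congrFun hpq u; simpa [h] using this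
      exact Prod.ext h1 h2
    rw [himg, Finset.sum_image hinj, Finset.sum_product]
    have hstep : ∀ σ1 ∈ (S.subtreesAt_finite c).toFinset,
        ∀ σ2 ∈ (S.subtreesL_finite L).toFinset,
        ((c :: L).map fun c' =>
            S.msgSub ((fun p : (S.V → ℕ) × (S.V → ℕ) =>
              fun u => if S.Reach c u then p.1 u else p.2 u) (σ1, σ2)) y c' s j).prod
          = S.msgSub σ1 y c s j * (L.map fun c' => S.msgSub σ2 y c' s j).prod := by
      intro σ1 _ σ2 _
      show ((c :: L).map fun c' =>
          S.msgSub (fun u => if S.Reach c u then σ1 u else σ2 u) y c' s j).prod = _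
      rw [List.map_cons, List.prod_cons]
      congr 1
      · exact S.msgSub_congr y (fun u hu => if_pos hu) s j
      · congr 1
        exact List.map_congr_left fun c' hc' =>
          S.msgSub_congr y (fun u hu => if_neg (fun hh => hnr c' hc' u hh hu)) s j
    rw [Finset.sum_congr rfl fun σ1 h1 => Finset.sum_congr rfl fun σ2 h2 => hstep σ1 h1 σ2 h2]
    rw [← Finset.sum_mul_sum]
    rw [List.map_cons, List.prod_cons, hall c (List.mem_cons_self) s j,
      ← ihL hpw' hall' s j]

lemma key (hS : S.Valid) (y : (Xvar ⊕ Zvar) → Option ℕ) :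
    ∀ (t : S.V) (s : Option S.V) (j : ℕ),
      S.msg y t s j = ∑ σ ∈ (S.subtreesAt_finite t).toFinset, S.msgSub σ y t s j := by
  suffices H : ∀ (n : ℕ) (t : S.V), S.rank t < n → ∀ (s : Option S.V) (j : ℕ),
      S.msg y t s j = ∑ σ ∈ (S.subtreesAt_finite t).toFinset, S.msgSub σ y t s j by
    exact fun t => H (S.rank t + 1) t (Nat.lt_succ_self _)
  intro n
  induction n with
  | zero => exact fun t h => absurd h (Nat.not_lt_zero _)
  | succ n ih =>
    intro t ht s j
    have hrec : ∀ c ∈ S.children t, S.rank c < n := fun c hc => by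
      have := S.rank_lt t c hc; omega
    cases hk : S.kind t with
    | vnode x =>
      have hns : ¬ S.isSum t := by
        rintro (⟨z, hz⟩ | hz)
        · rw [hk] at hz; cases hz
        · have hz' : S.kind t = SPGMKind.sumUnobs := hz
          rw [hk] at hz'; cases hz' 
      rcases hcl : S.children t with _ | ⟨c, cs⟩
      · have hset : S.subtreesAt t = {fun _ => 0} := by
          rw [S.subtreesAt_eq_subtreesL hns, hcl, S.subtreesL_nil hS]
        have htf : (S.subtreesAt_finite t).toFinset = {fun _ => 0} := by
          ext τ
          rw [Set.Finite.mem_toFinset, hset]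
          simp only [Set.mem_singleton_iff, Finset.mem_singleton]
        rw [S.msg_vnode_nil hk hcl, htf, Finset.sum_singleton,
          S.msgSub_vnode_nil hk hcl]
      · have hcs : cs = [] := by
          have h1 := hS.vnode_child t ⟨x, hk⟩
          rw [hcl] at h1
          simp only [List.length_cons] at h1
          exact List.eq_nil_of_length_eq_zero (by omega)
        subst hcs
        have hcm : c ∈ S.children t := by rw [hcl]; exact List.mem_cons_self
        have hrc : S.rank c < S.rank t := S.rank_lt t c hcm
        have hset : S.subtreesAt t = S.subtreesAt c := by
          rw [S.subtreesAt_eq_subtreesL hns, hcl, S.subtreesL_singleton]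
        have htf : (S.subtreesAt_finite t).toFinset = (S.subtreesAt_finite c).toFinset := by
          ext τ; simp [Set.Finite.mem_toFinset, hset]
        rw [S.msg_vnode_cons hk hcl hrc, htf]
        simp_rw [ih c (hrec c hcm) (some t), Finset.mul_sum]
        rw [Finset.sum_comm]
        refine Finset.sum_congr rfl fun τ hτ => ?_
        rw [S.msgSub_vnode_cons hk hcl hrc ((Set.Finite.mem_toFinset _ |>.mp hτ).1)]
    | prod =>
      have hns : ¬ S.isSum t := by
        rintro (⟨z, hz⟩ | hz)
        · rw [hk] at hz; cases hz
        · have hz' : S.kind t = SPGMKind.sumUnobs := hz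
          rw [hk] at hz'; cases hz' 
      have hset : S.subtreesAt t = S.subtreesL (S.children t) := S.subtreesAt_eq_subtreesL hns
      have htf : (S.subtreesAt_finite t).toFinset
          = (S.subtreesL_finite (S.children t)).toFinset := by
        ext τ; simp [Set.Finite.mem_toFinset, hset]
      rw [S.msg_prod hk, htf,
        ← S.key_prod hS y (S.children t) (hS.prod_scope t hk)
          (fun c hc s' j' => ih c (hrec c hc) s' j') s j]
      refine Finset.sum_congr rfl fun τ hτ => ?_
      exact (S.msgSub_prod hk ((Set.Finite.mem_toFinset _ |>.mp hτ).1)).symm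
    | sumObs z =>
      have hsum : S.isSum t := Or.inl ⟨z, hk⟩
      have hchild : ∀ k, k < (S.children t).length →
          (S.children t).getD k t ∈ S.children t := fun k hkm => by
        rw [List.getD_eq_getElem _ _ hkm]; exact List.getElem_mem _
      have hbi : (S.subtreesAt_finite t).toFinset =
          (Finset.range (S.children t).length).biUnion (fun k =>
            ((S.subtreesAt_finite ((S.children t).getD k t)).toFinset).image
              (fun τ => Function.update τ t k)) := by
        ext τ
        simp only [Set.Finite.mem_toFinset, Finset.mem_biUnion, Finset.mem_range,
          Finset.mem_image]
        constructor
        · intro hτ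
          exact ⟨τ t, hτ.1 t hsum, Function.update τ t 0, S.mem_subtreesAt_sum_elim hsum hτ,
            by rw [Function.update_idem, Function.update_eq_self]⟩
        · rintro ⟨k, hkm, τ', hτ', rfl⟩
          exact S.mem_subtreesAt_sum_intro hsum hkm hτ'
      have hdisj : (↑(Finset.range (S.children t).length) : Set ℕ).PairwiseDisjoint
          (fun k => ((S.subtreesAt_finite ((S.children t).getD k t)).toFinset).image
            (fun τ => Function.update τ t k)) := by
        intro k1 _ k2 _ hne
        simp only [Function.onFun]
        rw [Finset.disjoint_left]
        rintro τ h1 h2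
        simp only [Finset.mem_image] at h1 h2
        obtain ⟨a, -, rfl⟩ := h1
        obtain ⟨b, -, hb⟩ := h2
        apply hne
        have hbt := congrFun hb t
        rw [Function.update_self, Function.update_self] at hbt
        exact hbt.symm
      rw [S.msg_sumObs hk, hbi, Finset.sum_biUnion hdisj]
      refine Finset.sum_congr rfl fun k hkm => ?_
      have hkm' := Finset.mem_range.mp hkm
      have hcm := hchild k hkm'
      have hinj : ∀ a ∈ (S.subtreesAt_finite ((S.children t).getD k t)).toFinset,
          ∀ b ∈ (S.subtreesAt_finite ((S.children t).getD k t)).toFinset,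
          Function.update a t k = Function.update b t k → a = b := by
        intro a ha b hb hab
        funext u
        by_cases hu : u = t
        · subst hu
          rw [S.sigma_root_eq_zero hcm (Set.Finite.mem_toFinset _ |>.mp ha),
            S.sigma_root_eq_zero hcm (Set.Finite.mem_toFinset _ |>.mp hb)]
        · have := congrFun hab u
          rwa [Function.update_of_ne hu, Function.update_of_ne hu] at this
      rw [Finset.sum_image hinj, ih _ (hrec _ hcm) s j, Finset.mul_sum]
      refine Finset.sum_congr rfl fun τ hτ => ?_
      have hτm := Set.Finite.mem_toFinset _ |>.mp hτ
      have hcond : ∀ u, S.isSum u → Function.update τ t k u < (S.children u).length := by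
        intro u hu
        by_cases h : u = t
        · subst h; rwa [Function.update_self]
        · rw [Function.update_of_ne h]; exact hτm.1 u hu
      have hagree : S.msgSub (Function.update τ t k) y ((S.children t).getD k t) s j
          = S.msgSub τ y ((S.children t).getD k t) s j :=
        S.msgSub_congr y (fun u hu => (S.update_agree hcm τ k u hu).symm) s j
      rw [S.msgSub_sumObs hk hcond]
      simp only [Function.update_self]
      rw [hagree]
    | sumUnobs =>
      have hsum : S.isSum t := Or.inr hk
      have hchild : ∀ k, k < (S.children t).length →
          (S.children t).getD k t ∈ S.children t := fun k hkm => by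
        rw [List.getD_eq_getElem _ _ hkm]; exact List.getElem_mem _
      have hbi : (S.subtreesAt_finite t).toFinset =
          (Finset.range (S.children t).length).biUnion (fun k =>
            ((S.subtreesAt_finite ((S.children t).getD k t)).toFinset).image
              (fun τ => Function.update τ t k)) := by
        ext τ
        simp only [Set.Finite.mem_toFinset, Finset.mem_biUnion, Finset.mem_range,
          Finset.mem_image]
        constructor
        · intro hτ
          exact ⟨τ t, hτ.1 t hsum, Function.update τ t 0, S.mem_subtreesAt_sum_elim hsum hτ,
            by rw [Function.update_idem, Function.update_eq_self]⟩
        · rintro ⟨k, hkm, τ', hτ', rfl⟩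
          exact S.mem_subtreesAt_sum_intro hsum hkm hτ'
      have hdisj : (↑(Finset.range (S.children t).length) : Set ℕ).PairwiseDisjoint
          (fun k => ((S.subtreesAt_finite ((S.children t).getD k t)).toFinset).image
            (fun τ => Function.update τ t k)) := by
        intro k1 _ k2 _ hne
        simp only [Function.onFun]
        rw [Finset.disjoint_left]
        rintro τ h1 h2
        simp only [Finset.mem_image] at h1 h2
        obtain ⟨a, -, rfl⟩ := h1
        obtain ⟨b, -, hb⟩ := h2
        apply hne
        have hbt := congrFun hb t
        rw [Function.update_self, Function.update_self] at hbt
        exact hbt.symm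
      rw [S.msg_sumUnobs hk, hbi, Finset.sum_biUnion hdisj]
      refine Finset.sum_congr rfl fun k hkm => ?_
      have hkm' := Finset.mem_range.mp hkm
      have hcm := hchild k hkm'
      have hinj : ∀ a ∈ (S.subtreesAt_finite ((S.children t).getD k t)).toFinset,
          ∀ b ∈ (S.subtreesAt_finite ((S.children t).getD k t)).toFinset,
          Function.update a t k = Function.update b t k → a = b := by
        intro a ha b hb hab
        funext u
        by_cases hu : u = t
        · subst hu
          rw [S.sigma_root_eq_zero hcm (Set.Finite.mem_toFinset _ |>.mp ha),
            S.sigma_root_eq_zero hcm (Set.Finite.mem_toFinset _ |>.mp hb)]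
        · have := congrFun hab u
          rwa [Function.update_of_ne hu, Function.update_of_ne hu] at this
      rw [Finset.sum_image hinj, ih _ (hrec _ hcm) s j, Finset.mul_sum]
      refine Finset.sum_congr rfl fun τ hτ => ?_
      have hτm := Set.Finite.mem_toFinset _ |>.mp hτ
      have hcond : ∀ u, S.isSum u → Function.update τ t k u < (S.children u).length := by
        intro u hu
        by_cases h : u = t
        · subst h; rwa [Function.update_self]
        · rw [Function.update_of_ne h]; exact hτm.1 u hu
      have hagree : S.msgSub (Function.update τ t k) y ((S.children t).getD k t) s j
          = S.msgSub τ y ((S.children t).getD k t) s j :=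
        S.msgSub_congr y (fun u hu => (S.update_agree hcm τ k u hu).symm) s j
      rw [S.msgSub_sumUnobs hk hcond]
      simp only [Function.update_self]
      rw [hagree]

end SPGM

/-- For every valid SPGM `S` and every partial assignment `y` of a
subset of its variables, the evaluation of `S` equals the sum of the evaluations of all
of its subtrees (each computed by message passing within the subtree):
`S(y) = ∑_{τ ∈ T(S)} τ(y)`. -/
theorem spgm_eval_eq_sum_subtrees {Xvar Zvar : Type} {Xdom : Xvar → ℕ} {Zdom : Zvar → ℕ}
    (S : SPGM Xvar Zvar Xdom Zdom) (hS : S.Valid) (hN : S.Normalized)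
    (y : (Xvar ⊕ Zvar) → Option ℕ) :
    S.eval y = ∑ᶠ σ ∈ S.subtrees, S.evalSub σ y := by
  have hfin : S.subtrees.Finite := S.subtreesAt_finite S.root
  rw [finsum_mem_eq_finite_toFinset_sum _ hfin]
  exact S.key hS y S.root none 0
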